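/- Let R be an integral domain and let P and Q be nonzero locally principal ideals of R such that P is prime and P + Q is a maximal ideal of R. Then for every positive integer n, the ideal P + Qⁿ is a molecule of R. -/

import Mathlib

/-- If `P` and `Q` are nonzero locally principal ideals of a domain `R` with
`P` prime and `P + Q` maximal, then `P + Qⁿ` is a molecule for every `n ≥ 1`. -/
theorem stmt_19 {R : Type*} [CommRing R] [IsDomain R] (P Q : Ideal R)
    (hPne : P ≠ ⊥) (hQne : Q ≠ ⊥)
    (hPloc : ∀ (M : Ideal R) (hM : M.IsMaximal),
      (P.map (algebraMap R (@Localization.AtPrime R _ M hM.isPrime))).IsPrincipal)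
    (hQloc : ∀ (M : Ideal R) (hM : M.IsMaximal),
      (Q.map (algebraMap R (@Localization.AtPrime R _ M hM.isPrime))).IsPrincipal)
    (hP : P.IsPrime) (hmax : (P ⊔ Q).IsMaximal)
    (n : ℕ) (hn : 1 ≤ n) :
    P ⊔ Q ^ n ≠ ⊥ ∧ P ⊔ Q ^ n ≠ ⊤ ∧
      ∀ J K : Ideal R, P ⊔ Q ^ n = J * K → J = ⊤ ∨ K = ⊤ := by
  have hQnM : Q ^ n ≤ P ⊔ Q := le_trans (Ideal.pow_le_self (by omega)) le_sup_right
  refine ⟨?_, ?_, ?_⟩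
  · intro h
    exact hPne (le_bot_iff.mp (h ▸ le_sup_left))
  · intro h
    exact hmax.ne_top (top_le_iff.mp (h ▸ sup_le le_sup_left hQnM))
  · intro J K hJK
    by_contra hcon
    push_neg at hcon
    obtain ⟨hJ, hK⟩ := hcon
    -- any proper ideal containing P ⊔ Q ^ n is contained in M = P ⊔ Q
    have key : ∀ I : Ideal R, I ≠ ⊤ → P ⊔ Q ^ n ≤ I → I ≤ P ⊔ Q := by
      intro I hI hle
      obtain ⟨N, hN, hIN⟩ := Ideal.exists_le_maximal I hI
      have hPN : P ≤ N := le_trans (le_trans le_sup_left hle) hIN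
      have hQN : Q ≤ N :=
        (Ideal.IsPrime.pow_le_iff (hP := hN.isPrime) (by omega)).mp
          (le_trans (le_trans le_sup_right hle) hIN)
      have hMN : P ⊔ Q = N := hmax.eq_of_le hN.ne_top (sup_le hPN hQN)
      exact hMN ▸ hIN
    have hJM : J ≤ P ⊔ Q := key J hJ (hJK ▸ Ideal.mul_le_left)
    have hKM : K ≤ P ⊔ Q := key K hK (hJK ▸ Ideal.mul_le_right)
    -- localize at M := P ⊔ Q
    haveI hMp : (P ⊔ Q).IsPrime := hmax.isPrime
    set S := Localization.AtPrime (P ⊔ Q) with hSdef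
    set f := algebraMap R S with hfdef
    have hinj : Function.Injective f :=
      IsLocalization.injective S (P ⊔ Q).primeCompl_le_nonZeroDivisors
    obtain ⟨p, hp⟩ := (hPloc (P ⊔ Q) hmax).principal
    obtain ⟨q, hq⟩ := (hQloc (P ⊔ Q) hmax).principal
    have hp' : P.map f = Ideal.span {p} := hp
    have hq' : Q.map f = Ideal.span {q} := hq
    -- the image of M is span {p, q}
    have hMf : (P ⊔ Q).map f = Ideal.span {p, q} := by
      rw [Ideal.map_sup, hp', hq', ← Ideal.span_union, Set.singleton_union]
    -- the image of M is a proper prime ideal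
    have hMfprime : ((P ⊔ Q).map f).IsPrime := by
      apply IsLocalization.isPrime_of_isPrime_disjoint (P ⊔ Q).primeCompl S _ hMp
      exact disjoint_compl_left
    -- the image of P is a prime ideal
    have hPfprime : (P.map f).IsPrime := by
      apply IsLocalization.isPrime_of_isPrime_disjoint (P ⊔ Q).primeCompl S _ hP
      exact Set.disjoint_left.mpr fun x hx hxP => hx (le_sup_left (a := P) hxP)
    -- p ≠ 0
    have hp0 : p ≠ 0 := by
      intro h
      apply hPne
      rw [← Ideal.map_eq_bot_iff_of_injective hinj (I := P), hp', h,
        Ideal.span_singleton_eq_bot]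
    -- p lies in the square of the image of M
    have hpmem : p ∈ ((P ⊔ Q).map f) * ((P ⊔ Q).map f) := by
      have h1 : p ∈ P.map f := by rw [hp']; exact Ideal.mem_span_singleton_self p
      have h2 : P.map f ≤ (P ⊔ Q ^ n).map f := Ideal.map_mono le_sup_left
      have h3 : (P ⊔ Q ^ n).map f = (J.map f) * (K.map f) := by
        rw [hJK, Ideal.map_mul]
      have h4 : (J.map f) * (K.map f) ≤ ((P ⊔ Q).map f) * ((P ⊔ Q).map f) :=
        Ideal.mul_mono (Ideal.map_mono hJM) (Ideal.map_mono hKM)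
      exact h4 (h3 ▸ h2 h1)
    rw [hMf, Ideal.span_pair_mul_span_pair] at hpmem
    -- extract coefficients
    rw [Ideal.mem_span_insert] at hpmem
    obtain ⟨a, z1, hz1, he1⟩ := hpmem
    rw [Ideal.mem_span_insert] at hz1
    obtain ⟨b, z2, hz2, he2⟩ := hz1
    rw [Ideal.mem_span_insert] at hz2
    obtain ⟨c, z3, hz3, he3⟩ := hz2
    rw [Ideal.mem_span_singleton] at hz3
    obtain ⟨d, hd⟩ := hz3
    have hpeq : p = a * (p * p) + b * (p * q) + c * (q * p) + (q * q) * d := by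
      linear_combination he1 + he2 + he3 + hd
    -- p * (1 - a*p - b*q - c*q) = p * (q * q * d / p)... key identity
    have hup : p * (1 - a * p - b * q - c * q) = q * q * d := by
      linear_combination hpeq
    set u : S := 1 - a * p - b * q - c * q with hu
    -- p and q are in the image of M
    have hpM : p ∈ (P ⊔ Q).map f := by
      rw [hMf]; exact Ideal.subset_span (by simp)
    have hqM : q ∈ (P ⊔ Q).map f := by
      rw [hMf]; exact Ideal.subset_span (by simp)
    -- in both cases, u ∈ (P ⊔ Q).map f, giving 1 ∈ (P ⊔ Q).map f, absurd
    have huM : u ∈ (P ⊔ Q).map f := by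
      by_cases hqp : q ∈ P.map f
      · -- q = p * r
        rw [hp', Ideal.mem_span_singleton] at hqp
        obtain ⟨r, hr⟩ := hqp
        have : p * u = p * (r * (p * r) * d) := by rw [hup, hr]; ring
        have hucalc : u = r * (p * r) * d := mul_left_cancel₀ hp0 this
        rw [hucalc]
        exact Ideal.mul_mem_right _ _ (Ideal.mul_mem_left _ _
          (Ideal.mul_mem_right _ _ hpM))
      · -- q ∉ P.map f, use primality of P.map f
        have hmem : q * q * d ∈ P.map f := by
          rw [← hup]
          exact Ideal.mul_mem_right _ _ (by rw [hp']; exact Ideal.mem_span_singleton_self p)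
        have hdP : d ∈ P.map f := by
          rcases hPfprime.mem_or_mem hmem with h | h
          · rcases hPfprime.mem_or_mem h with h' | h' <;> exact absurd h' hqp
          · exact h
        rw [hp', Ideal.mem_span_singleton] at hdP
        obtain ⟨r, hr⟩ := hdP
        have : p * u = p * (q * q * r) := by rw [hup, hr]; ring
        have hucalc : u = q * q * r := mul_left_cancel₀ hp0 this
        rw [hucalc]
        exact Ideal.mul_mem_right _ _ (Ideal.mul_mem_right _ _ hqM)
    have h1M : (1 : S) ∈ (P ⊔ Q).map f := by
      have : (1 : S) = u + (a * p + b * q + c * q) := by rw [hu]; ring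
      rw [this]
      exact Ideal.add_mem _ huM (Ideal.add_mem _ (Ideal.add_mem _
        (Ideal.mul_mem_left _ _ hpM) (Ideal.mul_mem_left _ _ hqM))
        (Ideal.mul_mem_left _ _ hqM))
    exact hMfprime.ne_top ((Ideal.eq_top_iff_one _).mpr h1M)
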